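/- Let (L_i)_{i ≥ 1} be i.i.d. nonnegative random variables with E[e^{λ₀ L_1}] < ∞ for some λ₀ > 0, and let T be an ℕ-valued random variable on the same probability space (not assumed independent of (L_i)) satisfying P(T ≥ n) ≤ c₀ c₁^n for all n ≥ 0, for constants c₀ > 0 and c₁ ∈ (0,1). Then there exists λ > 0 such that E[ exp( λ ∑_{i=1}^{T} L_i ) ] < ∞. -/

import Mathlib

open MeasureTheory ProbabilityTheory
open scoped ENNReal

/-- If `(L_i)` are i.i.d. nonnegative random variables with a finite exponential
moment `E[e^{λ₀ L₁}] < ∞`, and `T` is an `ℕ`-valued random variable (not assumed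
independent of the `L_i`) with exponentially decaying tails `P(T ≥ n) ≤ c₀ c₁ⁿ`,
then `E[exp(λ ∑_{i=1}^{T} L_i)] < ∞` for some `λ > 0`. -/
theorem exp_moment_of_random_sum
    {Ω : Type*} [MeasurableSpace Ω] (P : Measure Ω) [IsProbabilityMeasure P]
    (L : ℕ → Ω → ℝ) (hmeas : ∀ i, Measurable (L i))
    (hnonneg : ∀ i ω, 0 ≤ L i ω)
    (hindep : iIndepFun L P)
    (hident : ∀ i j : ℕ, Measure.map (L i) P = Measure.map (L j) P)
    (lam₀ : ℝ) (hlam₀ : 0 < lam₀)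
    (hmom : ∫⁻ ω, ENNReal.ofReal (Real.exp (lam₀ * L 0 ω)) ∂P < ⊤)
    (T : Ω → ℕ) (hT : Measurable T)
    (c₀ c₁ : ℝ) (hc₀ : 0 < c₀) (hc₁ : c₁ ∈ Set.Ioo (0:ℝ) 1)
    (htail : ∀ n : ℕ, P {ω | n ≤ T ω} ≤ ENNReal.ofReal (c₀ * c₁ ^ n)) :
    ∃ lam : ℝ, 0 < lam ∧
      ∫⁻ ω, ENNReal.ofReal
        (Real.exp (lam * ∑ i ∈ Finset.range (T ω), L i ω)) ∂P < ⊤ := by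
  obtain ⟨hc₁0, hc₁1⟩ := hc₁
  set M₀ : ℝ≥0∞ := ∫⁻ ω, ENNReal.ofReal (Real.exp (lam₀ * L 0 ω)) ∂P with hM₀def
  have hM₀ne : M₀ ≠ ⊤ := hmom.ne
  set M : ℝ := M₀.toReal with hMdef
  have hM1 : 1 ≤ M := by
    have h1 : (1 : ℝ≥0∞) ≤ M₀ := by
      calc (1 : ℝ≥0∞) = ∫⁻ _, 1 ∂P := by simp
        _ ≤ M₀ := lintegral_mono fun ω => by
            rw [show (1 : ℝ≥0∞) = ENNReal.ofReal 1 by simp]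
            exact ENNReal.ofReal_le_ofReal
              (Real.one_le_exp (mul_nonneg hlam₀.le (hnonneg 0 ω)))
    have := ENNReal.toReal_mono hM₀ne h1
    simpa using this
  have hMpos : 0 < M := lt_of_lt_of_le one_pos hM1
  set θ : ℝ := min 1 ((1 - c₁) / (2 * c₁ * M)) with hθdef
  have hθpos : 0 < θ := by
    apply lt_min one_pos
    apply div_pos (by linarith) (by positivity)
  have hθ1 : θ ≤ 1 := min_le_left _ _
  have hθM : θ * (2 * c₁ * M) ≤ 1 - c₁ := by
    have h := min_le_right 1 ((1 - c₁) / (2 * c₁ * M))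
    have hb : (0:ℝ) < 2 * c₁ * M := by positivity
    calc θ * (2 * c₁ * M) ≤ ((1 - c₁) / (2 * c₁ * M)) * (2 * c₁ * M) :=
          mul_le_mul_of_nonneg_right h hb.le
      _ = 1 - c₁ := div_mul_cancel₀ _ hb.ne'
  set B : ℝ := 1 - θ + θ * M with hBdef
  have hB1 : 1 ≤ B := by nlinarith
  have hB0 : 0 ≤ B := by linarith
  have hBc : B * c₁ < 1 := by nlinarith
  set lam : ℝ := θ * lam₀ / 2 with hlamdef
  have hlam : 0 < lam := by positivity
  have h2lam : 2 * lam = θ * lam₀ := by rw [hlamdef]; ring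
  -- measurability of the exponential maps
  have hφ : ∀ c : ℝ, Measurable fun x : ℝ => ENNReal.ofReal (Real.exp (c * x)) :=
    fun c => ENNReal.measurable_ofReal.comp (Real.measurable_exp.comp (measurable_const_mul c))
  have hSmeas : ∀ n, Measurable fun ω => ∑ i ∈ Finset.range n, L i ω :=
    fun n => Finset.measurable_sum _ fun i _ => hmeas i
  have hEmeas : ∀ (c : ℝ) (n), Measurable fun ω =>
      ENNReal.ofReal (Real.exp (c * ∑ i ∈ Finset.range n, L i ω)) :=
    fun c n => (hφ c).comp (hSmeas n)
  -- identical distribution transfer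
  have hident' : ∀ (c : ℝ) (i : ℕ),
      (∫⁻ ω, ENNReal.ofReal (Real.exp (c * L i ω)) ∂P)
        = ∫⁻ ω, ENNReal.ofReal (Real.exp (c * L 0 ω)) ∂P := by
    intro c i
    rw [← lintegral_map (hφ c) (hmeas i), ← lintegral_map (hφ c) (hmeas 0), hident i 0]
  -- single-variable bound
  have key1 : ∀ i : ℕ,
      (∫⁻ ω, ENNReal.ofReal (Real.exp (2 * lam * L i ω)) ∂P) ≤ ENNReal.ofReal B := by
    intro i
    rw [hident' _ i]
    have hpt : ∀ ω, ENNReal.ofReal (Real.exp (2 * lam * L 0 ω))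
        ≤ ENNReal.ofReal (1 - θ)
          + ENNReal.ofReal θ * ENNReal.ofReal (Real.exp (lam₀ * L 0 ω)) := by
      intro ω
      have hconv := convexOn_exp.2 (Set.mem_univ (0:ℝ)) (Set.mem_univ (lam₀ * L 0 ω))
        (by linarith : (0:ℝ) ≤ 1 - θ) hθpos.le (by ring)
      simp only [smul_eq_mul, mul_zero, zero_add, Real.exp_zero, mul_one] at hconv
      calc ENNReal.ofReal (Real.exp (2 * lam * L 0 ω))
          ≤ ENNReal.ofReal ((1 - θ) + θ * Real.exp (lam₀ * L 0 ω)) := by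
            apply ENNReal.ofReal_le_ofReal
            rw [show 2 * lam * L 0 ω = θ * (lam₀ * L 0 ω) by rw [← mul_assoc, h2lam]]
            exact hconv
        _ = ENNReal.ofReal (1 - θ) + ENNReal.ofReal (θ * Real.exp (lam₀ * L 0 ω)) :=
            ENNReal.ofReal_add (by linarith) (by positivity)
        _ = ENNReal.ofReal (1 - θ)
            + ENNReal.ofReal θ * ENNReal.ofReal (Real.exp (lam₀ * L 0 ω)) := by
            rw [ENNReal.ofReal_mul hθpos.le]
    calc (∫⁻ ω, ENNReal.ofReal (Real.exp (2 * lam * L 0 ω)) ∂P)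
        ≤ ∫⁻ ω, (ENNReal.ofReal (1 - θ)
            + ENNReal.ofReal θ * ENNReal.ofReal (Real.exp (lam₀ * L 0 ω))) ∂P :=
          lintegral_mono hpt
      _ = ENNReal.ofReal (1 - θ) + ENNReal.ofReal θ * M₀ := by
          rw [lintegral_add_left measurable_const,
            lintegral_const_mul _
              (show Measurable fun ω => ENNReal.ofReal (Real.exp (lam₀ * L 0 ω)) from
                (hφ lam₀).comp (hmeas 0)), lintegral_const]
          simp [hM₀def]
      _ = ENNReal.ofReal B := by
          rw [← ENNReal.ofReal_toReal hM₀ne, ← hMdef, ← ENNReal.ofReal_mul hθpos.le,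
            ← ENNReal.ofReal_add (by linarith) (by positivity), hBdef]
  -- product bound for partial sums
  have key2 : ∀ n : ℕ,
      (∫⁻ ω, ENNReal.ofReal (Real.exp (2 * lam * ∑ i ∈ Finset.range n, L i ω)) ∂P)
        ≤ (ENNReal.ofReal B) ^ n := by
    intro n
    induction n with
    | zero => simp
    | succ n ih =>
      have hind : IndepFun
          (fun ω => ENNReal.ofReal (Real.exp (2 * lam * ∑ i ∈ Finset.range n, L i ω)))
          (fun ω => ENNReal.ofReal (Real.exp (2 * lam * L n ω))) P := by
        have h := (hindep.indepFun_sum_range_succ hmeas n).comp (hφ (2 * lam)) (hφ (2 * lam))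
        simpa [Function.comp_def, Finset.sum_apply] using h
      calc (∫⁻ ω, ENNReal.ofReal
              (Real.exp (2 * lam * ∑ i ∈ Finset.range (n + 1), L i ω)) ∂P)
          = ∫⁻ ω, (ENNReal.ofReal (Real.exp (2 * lam * ∑ i ∈ Finset.range n, L i ω)))
              * ENNReal.ofReal (Real.exp (2 * lam * L n ω)) ∂P := by
            apply lintegral_congr; intro ω
            rw [Finset.sum_range_succ, mul_add, Real.exp_add,
              ENNReal.ofReal_mul (Real.exp_nonneg _)]
        _ = (∫⁻ ω, ENNReal.ofReal (Real.exp (2 * lam * ∑ i ∈ Finset.range n, L i ω)) ∂P)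
            * ∫⁻ ω, ENNReal.ofReal (Real.exp (2 * lam * L n ω)) ∂P :=
            lintegral_mul_eq_lintegral_mul_lintegral_of_indepFun''
              (hEmeas (2 * lam) n).aemeasurable ((hφ (2 * lam)).comp (hmeas n)).aemeasurable hind
        _ ≤ (ENNReal.ofReal B) ^ n * ENNReal.ofReal B := mul_le_mul' ih (key1 n)
        _ = (ENNReal.ofReal B) ^ (n + 1) := (pow_succ _ _).symm
  -- decomposition over the value of T
  set F : ℕ → Ω → ℝ≥0∞ := fun n ω =>
    ENNReal.ofReal (Real.exp (lam * ∑ i ∈ Finset.range n, L i ω))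
      * ({ω | T ω = n}.indicator (fun _ => (1 : ℝ≥0∞)) ω) with hFdef
  have hset : ∀ n : ℕ, MeasurableSet {ω | T ω = n} := fun n => hT (measurableSet_singleton n)
  have hFmeas : ∀ n, Measurable (F n) :=
    fun n => (hEmeas lam n).mul (measurable_const.indicator (hset n))
  have hdecomp : ∀ ω, ENNReal.ofReal (Real.exp (lam * ∑ i ∈ Finset.range (T ω), L i ω))
      = ∑' n, F n ω := by
    intro ω
    symm
    rw [tsum_eq_single (T ω) (fun b hb => by
      simp [hFdef, Set.indicator_of_notMem, (Ne.symm hb : T ω ≠ b)])]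
    simp [hFdef]
  -- per-term Cauchy–Schwarz bound
  set s : ℝ≥0∞ := (ENNReal.ofReal (B * c₁)) ^ (1/2 : ℝ) with hsdef
  have hterm : ∀ n : ℕ, (∫⁻ ω, F n ω ∂P) ≤ (ENNReal.ofReal c₀) ^ (1/2 : ℝ) * s ^ n := by
    intro n
    have h22 : Real.HolderConjugate 2 2 := ⟨by norm_num, by norm_num, by norm_num⟩
    have hCS := ENNReal.lintegral_mul_le_Lp_mul_Lq P h22
      (f := fun ω => ENNReal.ofReal (Real.exp (lam * ∑ i ∈ Finset.range n, L i ω)))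
      (g := {ω | T ω = n}.indicator (fun _ => (1 : ℝ≥0∞)))
      (hEmeas lam n).aemeasurable (measurable_const.indicator (hset n)).aemeasurable
    have hf2 : (∫⁻ ω, (ENNReal.ofReal
          (Real.exp (lam * ∑ i ∈ Finset.range n, L i ω))) ^ (2:ℝ) ∂P)
        ≤ (ENNReal.ofReal B) ^ n := by
      refine le_trans (le_of_eq (lintegral_congr fun ω => ?_)) (key2 n)
      rw [ENNReal.ofReal_rpow_of_nonneg (Real.exp_nonneg _) (by norm_num : (0:ℝ) ≤ 2),
        ← Real.exp_mul]
      ring_nf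
    have hg2 : (∫⁻ ω, (({ω | T ω = n}.indicator (fun _ => (1 : ℝ≥0∞)) ω)) ^ (2:ℝ) ∂P)
        ≤ ENNReal.ofReal (c₀ * c₁ ^ n) := by
      have : (∫⁻ ω, (({ω | T ω = n}.indicator (fun _ => (1 : ℝ≥0∞)) ω)) ^ (2:ℝ) ∂P)
          = P {ω | T ω = n} := by
        rw [show (fun ω => (({ω | T ω = n}.indicator (fun _ => (1 : ℝ≥0∞)) ω)) ^ (2:ℝ))
            = {ω | T ω = n}.indicator (fun _ => (1 : ℝ≥0∞)) from funext fun ω => by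
          by_cases h : ω ∈ {ω | T ω = n} <;>
            simp [h, ENNReal.zero_rpow_of_pos (by norm_num : (0:ℝ) < 2)]]
        rw [lintegral_indicator (hset n)]
        simp
      rw [this]
      refine le_trans (measure_mono fun ω (h : T ω = n) => ?_) (htail n)
      exact (h.symm.le : n ≤ T ω)
    calc (∫⁻ ω, F n ω ∂P)
        ≤ (∫⁻ ω, (ENNReal.ofReal
            (Real.exp (lam * ∑ i ∈ Finset.range n, L i ω))) ^ (2:ℝ) ∂P) ^ (1/2 : ℝ)
          * (∫⁻ ω, (({ω | T ω = n}.indicator (fun _ => (1 : ℝ≥0∞)) ω)) ^ (2:ℝ) ∂P) ^ (1/2 : ℝ) :=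
          hCS
      _ ≤ ((ENNReal.ofReal B) ^ n) ^ (1/2 : ℝ) * (ENNReal.ofReal (c₀ * c₁ ^ n)) ^ (1/2 : ℝ) := by
          exact mul_le_mul' (ENNReal.rpow_le_rpow hf2 (by norm_num))
            (ENNReal.rpow_le_rpow hg2 (by norm_num))
      _ = ((ENNReal.ofReal B) ^ n * ENNReal.ofReal (c₀ * c₁ ^ n)) ^ (1/2 : ℝ) :=
          (ENNReal.mul_rpow_of_nonneg _ _ (by norm_num)).symm
      _ = (ENNReal.ofReal c₀ * (ENNReal.ofReal (B * c₁)) ^ n) ^ (1/2 : ℝ) := by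
          rw [ENNReal.ofReal_mul hc₀.le, ENNReal.ofReal_pow hc₁0.le,
            ENNReal.ofReal_mul hB0, mul_pow]
          ring_nf
      _ = (ENNReal.ofReal c₀) ^ (1/2 : ℝ) * s ^ n := by
          rw [ENNReal.mul_rpow_of_nonneg _ _ (by norm_num : (0:ℝ) ≤ 1/2), hsdef,
            ← ENNReal.rpow_natCast (ENNReal.ofReal (B * c₁)) n, ← ENNReal.rpow_mul,
            mul_comm (n : ℝ) (1/2 : ℝ), ENNReal.rpow_mul,
            ENNReal.rpow_natCast]
  refine ⟨lam, hlam, ?_⟩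
  have hs1 : s < 1 := ENNReal.rpow_lt_one (ENNReal.ofReal_lt_one.mpr hBc) (by norm_num)
  calc (∫⁻ ω, ENNReal.ofReal
          (Real.exp (lam * ∑ i ∈ Finset.range (T ω), L i ω)) ∂P)
      = ∑' n, ∫⁻ ω, F n ω ∂P := by
        rw [lintegral_congr hdecomp]
        exact lintegral_tsum fun n => (hFmeas n).aemeasurable
    _ ≤ ∑' n, (ENNReal.ofReal c₀) ^ (1/2 : ℝ) * s ^ n := ENNReal.tsum_le_tsum hterm
    _ = (ENNReal.ofReal c₀) ^ (1/2 : ℝ) * ∑' n, s ^ n := ENNReal.tsum_mul_left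
    _ = (ENNReal.ofReal c₀) ^ (1/2 : ℝ) * (1 - s)⁻¹ := by rw [ENNReal.tsum_geometric]
    _ < ⊤ := by
        apply ENNReal.mul_lt_top
        · exact ENNReal.rpow_lt_top_of_nonneg (by norm_num) ENNReal.ofReal_ne_top
        · exact ENNReal.inv_lt_top.mpr (tsub_pos_of_lt hs1)
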